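/- Let G_t = sqrt(Σ_{s=1}^t ‖g_s‖²), σ > 0, and define η_s = αD/sqrt(σ² + G_s²) and η̃_s = αD/sqrt(σ² + ‖∇f(w_s)‖² + G_{s-1}²). Then |η̃_s − η_s| · ‖g_s‖ ≤ (1/(αD))·η_s·η̃_s·‖g_s − ∇f(w_s)‖·‖g_s‖. -/

import Mathlib

open Finset

private lemma aux_stepsize (c sa sb p q r : ℝ) (hc : 0 < c) (hsa : 0 < sa) (hsb : 0 < sb)
    (hpx : p ≤ sa) (hqy : q ≤ sb) (hp : 0 ≤ p) (hq : 0 ≤ q)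
    (hr : 0 ≤ r) (hpq : |p - q| ≤ r)
    (hxy : sa ^ 2 - sb ^ 2 = p ^ 2 - q ^ 2) :
    |c / sb - c / sa| ≤ 1 / c * (c / sa) * (c / sb) * r := by
  have hsab : |sa - sb| ≤ r := by
    have h1 : |sa - sb| * (sa + sb) = |p - q| * (p + q) := by
      rw [← abs_of_nonneg (show (0:ℝ) ≤ sa + sb by positivity), ← abs_mul,
        ← abs_of_nonneg (show (0:ℝ) ≤ p + q by positivity), ← abs_mul]
      congr 1
      nlinarith
    have h2 : |p - q| * (p + q) ≤ r * (sa + sb) := by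
      apply mul_le_mul hpq (add_le_add hpx hqy) (by positivity) hr
    have hpos : 0 < sa + sb := by positivity
    rw [← mul_le_mul_iff_of_pos_right hpos, h1]
    exact h2
  have hdiff : c / sb - c / sa = c * (sa - sb) / (sa * sb) := by
    field_simp
  have hrhs : 1 / c * (c / sa) * (c / sb) * r = c * r / (sa * sb) := by
    field_simp
  rw [hdiff, hrhs, abs_div, abs_mul, abs_of_pos hc,
    abs_of_pos (show (0:ℝ) < sa * sb by positivity)]
  apply div_le_div_of_nonneg_right _ (by positivity)
  exact mul_le_mul_of_nonneg_left hsab hc.le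

/-- Bound on the difference between the AdaGrad stepsize `η_s` and its decorrelated
version `η̃_s`: `|η̃_s − η_s| ‖g_s‖ ≤ (1/(αD)) η_s η̃_s ‖g_s − ∇f(w_s)‖ ‖g_s‖`. -/
theorem stepsize_decorrelation_bound {d : ℕ}
    (α D σ : ℝ) (hα : 0 < α) (hD : 0 < D) (hσ : 0 < σ)
    (g h : ℕ → EuclideanSpace ℝ (Fin d)) (s : ℕ) (hs : 1 ≤ s) :
    let ηs : ℝ := α * D / Real.sqrt (σ ^ 2 + ∑ i ∈ Finset.Icc 1 s, ‖g i‖ ^ 2)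
    let ηts : ℝ :=
      α * D / Real.sqrt (σ ^ 2 + ‖h s‖ ^ 2 + ∑ i ∈ Finset.Icc 1 (s - 1), ‖g i‖ ^ 2)
    |ηts - ηs| * ‖g s‖ ≤ (1 / (α * D)) * ηs * ηts * ‖g s - h s‖ * ‖g s‖ := by
  intro ηs ηts
  have hsum : ∑ i ∈ Finset.Icc 1 s, ‖g i‖ ^ 2
      = (∑ i ∈ Finset.Icc 1 (s - 1), ‖g i‖ ^ 2) + ‖g s‖ ^ 2 := by
    have hse : s = (s - 1) + 1 := by omega
    rw [hse, Finset.sum_Icc_succ_top (by omega)]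
    simp
  have hpos_sum : (0:ℝ) ≤ ∑ i ∈ Finset.Icc 1 (s - 1), ‖g i‖ ^ 2 :=
    Finset.sum_nonneg fun i _ => by positivity
  have ha : 0 < σ ^ 2 + ∑ i ∈ Finset.Icc 1 s, ‖g i‖ ^ 2 := by
    rw [hsum]; nlinarith [sq_nonneg (‖g s‖)]
  have hb : 0 < σ ^ 2 + ‖h s‖ ^ 2 + ∑ i ∈ Finset.Icc 1 (s - 1), ‖g i‖ ^ 2 := by
    nlinarith [sq_nonneg (‖h s‖)]
  have hsa2 := Real.sq_sqrt ha.le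
  have hsb2 := Real.sq_sqrt hb.le
  have hsa := Real.sqrt_pos.mpr ha
  have hsb := Real.sqrt_pos.mpr hb
  have hgs : ‖g s‖ ≤ Real.sqrt (σ ^ 2 + ∑ i ∈ Finset.Icc 1 s, ‖g i‖ ^ 2) := by
    nlinarith [norm_nonneg (g s), hsum, sq_nonneg σ]
  have hhs : ‖h s‖ ≤
      Real.sqrt (σ ^ 2 + ‖h s‖ ^ 2 + ∑ i ∈ Finset.Icc 1 (s - 1), ‖g i‖ ^ 2) := by
    nlinarith [norm_nonneg (h s), sq_nonneg σ]
  have hxy : (σ ^ 2 + ∑ i ∈ Finset.Icc 1 s, ‖g i‖ ^ 2)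
      - (σ ^ 2 + ‖h s‖ ^ 2 + ∑ i ∈ Finset.Icc 1 (s - 1), ‖g i‖ ^ 2)
      = ‖g s‖ ^ 2 - ‖h s‖ ^ 2 := by
    rw [hsum]; ring
  have key := aux_stepsize (α * D)
    (Real.sqrt (σ ^ 2 + ∑ i ∈ Finset.Icc 1 s, ‖g i‖ ^ 2))
    (Real.sqrt (σ ^ 2 + ‖h s‖ ^ 2 + ∑ i ∈ Finset.Icc 1 (s - 1), ‖g i‖ ^ 2))
    (‖g s‖) (‖h s‖) (‖g s - h s‖)
    (by positivity) hsa hsb hgs hhs (norm_nonneg _) (norm_nonneg _) (norm_nonneg _)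
    (abs_norm_sub_norm_le _ _)
    (by rw [hsa2, hsb2]; exact hxy)
  exact mul_le_mul_of_nonneg_right key (norm_nonneg _)
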